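/- If a sequence of events Ω_n satisfies P(Ω_n) → 1 and random vectors α_n satisfy E[Z·1_{Ω_n}·g(α_n)] → E[Z]·E[g(α)] for every bounded measurable Z and bounded continuous g, then α_n converges stably in law to α with α independent of the underlying σ-field; moreover, if the conditioning σ-fields H_n ↑ G and E[Z|H_n] → Z in L¹ for Z bounded G-measurable, it suffices to verify the convergence for Z measurable with respect to some H_q. -/

import Mathlib

open MeasureTheory Filter

/-- Reduction lemma for stable convergence in law: if events `Ω_n` satisfy
`P(Ω_n) → 1`, the σ-fields `H_q` increase to the ambient σ-field, and
`E[Z·1_{Ω_n}·g(α_n)] → E[Z]·E[g(α)]` holds for every bounded `Z` that is measurable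
with respect to some `H_q` and every bounded continuous `g`, then
`E[Z·g(α_n)] → E[Z]·E[g(α)]` for every bounded measurable `Z` and bounded continuous
`g`, i.e. `α_n` converges stably in law to `α` with `α` independent of the underlying
σ-field (here `α` lives on an extension `(Ω', P')`). -/
theorem stable_convergence_reduction
    {Ω : Type*} [mΩ : MeasurableSpace Ω] (P : Measure Ω) [IsProbabilityMeasure P]
    {Ω' : Type*} [MeasurableSpace Ω'] (P' : Measure Ω') [IsProbabilityMeasure P']
    (A : ℕ → Set Ω) (hA : ∀ n, MeasurableSet (A n))
    (hAlim : Tendsto (fun n => P (A n)) atTop (nhds 1))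
    (H : ℕ → MeasurableSpace Ω) (hHmono : Monotone H) (hHle : ∀ q, H q ≤ mΩ)
    (hHsup : (⨆ q, H q) = mΩ)
    (αn : ℕ → Ω → ℝ) (α : Ω' → ℝ)
    (hαn : ∀ n, Measurable (αn n)) (hα : Measurable α)
    (hrestr : ∀ (q : ℕ) (Z : Ω → ℝ), Measurable[H q] Z → (∃ C, ∀ ω, |Z ω| ≤ C) →
      ∀ (g : ℝ → ℝ), Continuous g → (∃ C, ∀ x, |g x| ≤ C) →
      Tendsto (fun n => ∫ ω in A n, Z ω * g (αn n ω) ∂P) atTop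
        (nhds ((∫ ω, Z ω ∂P) * (∫ ω', g (α ω') ∂P')))) :
    ∀ (Z : Ω → ℝ), Measurable Z → (∃ C, ∀ ω, |Z ω| ≤ C) →
    ∀ (g : ℝ → ℝ), Continuous g → (∃ C, ∀ x, |g x| ≤ C) →
    Tendsto (fun n => ∫ ω, Z ω * g (αn n ω) ∂P) atTop
      (nhds ((∫ ω, Z ω ∂P) * (∫ ω', g (α ω') ∂P'))) := by
  rintro Z hZmeas ⟨C0, hZC0⟩ g hg ⟨D0, hgD0⟩
  set C : ℝ := max C0 0 with hCdef
  set D : ℝ := max D0 0 with hDdef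
  have hC : 0 ≤ C := le_max_right _ _
  have hD : 0 ≤ D := le_max_right _ _
  have hZC : ∀ ω, |Z ω| ≤ C := fun ω => (hZC0 ω).trans (le_max_left _ _)
  have hgD : ∀ x, |g x| ≤ D := fun x => (hgD0 x).trans (le_max_left _ _)
  -- the filtration
  let ℱ : Filtration ℕ mΩ := ⟨H, hHmono, hHle⟩
  -- basic integrability facts
  have hbd_int : ∀ (f : Ω → ℝ), Measurable f → ∀ (K : ℝ), (∀ ω, |f ω| ≤ K) →
      Integrable f P := by
    intro f hf K hK
    refine (integrable_const K).mono' hf.aestronglyMeasurable (ae_of_all _ ?_)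
    intro ω
    simpa [Real.norm_eq_abs] using hK ω
  have hZint : Integrable Z P := hbd_int Z hZmeas C hZC
  have hgα' : Integrable (fun ω' => g (α ω')) P' :=
    (integrable_const D).mono' ((hg.measurable.comp hα).aestronglyMeasurable)
      (ae_of_all _ (fun ω' => by simpa [Real.norm_eq_abs] using hgD (α (ω'))))
  have hMbd : |∫ ω', g (α ω') ∂P'| ≤ D := by
    calc |∫ ω', g (α ω') ∂P'| ≤ ∫ ω', |g (α ω')| ∂P' := by
          simpa [Real.norm_eq_abs] using norm_integral_le_integral_norm (fun ω' => g (α ω'))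
      _ ≤ ∫ _ω', D ∂P' := integral_mono hgα'.abs (integrable_const D) (fun ω' => hgD _)
      _ = D := by simp
  -- L¹ martingale convergence
  have hsm : StronglyMeasurable[⨆ n, ℱ n] Z := by
    have hsup' : (⨆ n, (ℱ n : MeasurableSpace Ω)) = mΩ := hHsup
    rw [hsup']
    exact hZmeas.stronglyMeasurable
  have hL1 : Tendsto (fun q => eLpNorm (P[Z|ℱ q] - Z) 1 P) atTop (nhds 0) :=
    hZint.tendsto_eLpNorm_condExp hsm
  -- measure of complements tends to 0
  have hcompl : Tendsto (fun n => (P (A n)ᶜ).toReal) atTop (nhds 0) := by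
    have h1 : ∀ n, P (A n)ᶜ = 1 - P (A n) := fun n => by
      rw [measure_compl (hA n) (measure_ne_top _ _), measure_univ]
    have h2 : Tendsto (fun n => 1 - P (A n)) atTop (nhds (1 - 1)) :=
      ENNReal.Tendsto.sub tendsto_const_nhds hAlim (Or.inl ENNReal.one_ne_top)
    have h3 : Tendsto (fun n => P (A n)ᶜ) atTop (nhds 0) := by
      simpa [h1] using h2
    have := (ENNReal.tendsto_toReal ENNReal.zero_ne_top).comp h3
    exact this
  rw [Metric.tendsto_atTop]
  intro ε hε
  set M : ℝ := ∫ ω', g (α ω') ∂P' with hMdef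
  -- choose q with small L¹ error
  have hε' : (0:ℝ) < ε / (4 * (D + 1)) := by positivity
  obtain ⟨q, hq⟩ : ∃ q, eLpNorm (P[Z|ℱ q] - Z) 1 P < ENNReal.ofReal (ε / (4 * (D + 1))) :=
    (hL1.eventually_lt_const (by simpa using ENNReal.ofReal_pos.mpr hε')).exists
  set Y : Ω → ℝ := P[Z|ℱ q] with hYdef
  set Zq : Ω → ℝ := fun ω => max (-C) (min (Y ω) C) with hZqdef
  have hZqmeas : Measurable[H q] Zq :=
    measurable_const.max ((stronglyMeasurable_condExp.measurable).min measurable_const)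
  have hZqC : ∀ ω, |Zq ω| ≤ C := by
    intro ω
    rw [abs_le]
    constructor
    · exact le_max_left _ _
    · exact max_le (by linarith) (min_le_right _ _)
  have hclip : ∀ ω, |Z ω - Zq ω| ≤ |Z ω - Y ω| := by
    intro ω
    have h1 := abs_le.mp (hZC ω)
    have hla := le_abs_self (Z ω - Y ω)
    have hlb := neg_abs_le (Z ω - Y ω)
    simp only [hZqdef]
    rcases le_total (Y ω) (-C) with h | h
    · rw [min_eq_left (h.trans (by linarith)), max_eq_left h,
        abs_of_nonneg (by linarith)]
      linarith
    · rcases le_total C (Y ω) with h2 | h2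
      · rw [min_eq_right h2, max_eq_right (by linarith : -C ≤ C),
          abs_of_nonpos (by linarith)]
        linarith
      · rw [min_eq_left h2, max_eq_right h]
  -- δ : the L¹ distance
  have hdiffint : Integrable (fun ω => Z ω - Y ω) P := hZint.sub integrable_condExp
  set δ : ℝ := ∫ ω, |Z ω - Zq ω| ∂P with hδdef
  have hδ0 : 0 ≤ δ := integral_nonneg (fun ω => abs_nonneg _)
  have hZqint : Integrable Zq P := hbd_int Zq (hZqmeas.mono (hHle q) le_rfl) C hZqC
  have hδ : δ < ε / (4 * (D + 1)) := by
    have heq : ENNReal.ofReal (∫ ω, ‖Z ω - Y ω‖ ∂P) = eLpNorm (P[Z|ℱ q] - Z) 1 P := by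
      rw [ofReal_integral_norm_eq_lintegral_enorm hdiffint, eLpNorm_one_eq_lintegral_enorm]
      refine lintegral_congr (fun ω => ?_)
      simp only [Pi.sub_apply, hYdef]
      rw [show Z ω - (P[Z|ℱ q]) ω = -((P[Z|ℱ q]) ω - Z ω) by ring, enorm_neg]
    have hlt : ENNReal.ofReal (∫ ω, ‖Z ω - Y ω‖ ∂P) < ENNReal.ofReal (ε / (4 * (D + 1))) := by
      rw [heq]; exact hq
    have h2 : ∫ ω, ‖Z ω - Y ω‖ ∂P < ε / (4 * (D + 1)) :=
      (ENNReal.ofReal_lt_ofReal_iff hε').mp hlt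
    have h3 : δ ≤ ∫ ω, ‖Z ω - Y ω‖ ∂P := by
      refine integral_mono ((hZint.sub hZqint).abs) hdiffint.norm (fun ω => ?_)
      simpa [Real.norm_eq_abs] using hclip ω
    linarith
  -- from the restricted hypothesis
  have hT3 := hrestr q Zq hZqmeas ⟨C, hZqC⟩ g hg ⟨D, hgD⟩
  rw [Metric.tendsto_atTop] at hT3
  obtain ⟨N1, hN1⟩ := hT3 (ε / 4) (by positivity)
  -- complement measure small
  have hε4 : (0:ℝ) < ε / (4 * (C * D + 1)) := by positivity
  obtain ⟨N2, hN2⟩ := (Metric.tendsto_atTop.mp hcompl) (ε / (4 * (C * D + 1))) hε4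
  refine ⟨max N1 N2, fun n hn => ?_⟩
  have hn1 : n ≥ N1 := le_trans (le_max_left _ _) hn
  have hn2 : n ≥ N2 := le_trans (le_max_right _ _) hn
  -- integrability for this n
  have hgαn : Measurable (fun ω => g (αn n ω)) := hg.measurable.comp (hαn n)
  have hI1 : Integrable (fun ω => Z ω * g (αn n ω)) P :=
    hbd_int _ (hZmeas.mul hgαn) (C * D)
      (fun ω => by rw [abs_mul]; exact mul_le_mul (hZC ω) (hgD _) (abs_nonneg _) hC)
  have hI2 : Integrable (fun ω => Zq ω * g (αn n ω)) P :=
    hbd_int _ ((hZqmeas.mono (hHle q) le_rfl).mul hgαn) (C * D)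
      (fun ω => by rw [abs_mul]; exact mul_le_mul (hZqC ω) (hgD _) (abs_nonneg _) hC)
  -- term 1 : replacing Z by Zq
  have hT1 : |(∫ ω, Z ω * g (αn n ω) ∂P) - ∫ ω, Zq ω * g (αn n ω) ∂P| ≤ δ * D := by
    rw [← integral_sub hI1 hI2]
    have h1 : |∫ ω, (Z ω * g (αn n ω) - Zq ω * g (αn n ω)) ∂P|
        ≤ ∫ ω, |Z ω * g (αn n ω) - Zq ω * g (αn n ω)| ∂P := by
      simpa [Real.norm_eq_abs] using
        norm_integral_le_integral_norm (fun ω => Z ω * g (αn n ω) - Zq ω * g (αn n ω))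
    refine h1.trans ?_
    have h2 : ∀ ω, |Z ω * g (αn n ω) - Zq ω * g (αn n ω)| ≤ |Z ω - Zq ω| * D := by
      intro ω
      rw [← sub_mul, abs_mul]
      exact mul_le_mul_of_nonneg_left (hgD _) (abs_nonneg _)
    calc ∫ ω, |Z ω * g (αn n ω) - Zq ω * g (αn n ω)| ∂P
        ≤ ∫ ω, |Z ω - Zq ω| * D ∂P :=
          integral_mono (hI1.sub hI2).abs ((hZint.sub hZqint).abs.mul_const D) h2
      _ = δ * D := by rw [integral_mul_const]
  -- term 2 : restricting to A n
  have hT2 : |(∫ ω, Zq ω * g (αn n ω) ∂P) - ∫ ω in A n, Zq ω * g (αn n ω) ∂P|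
      ≤ C * D * (P (A n)ᶜ).toReal := by
    have hsplit := integral_add_compl (hA n) hI2
    have : (∫ ω, Zq ω * g (αn n ω) ∂P) - ∫ ω in A n, Zq ω * g (αn n ω) ∂P
        = ∫ ω in (A n)ᶜ, Zq ω * g (αn n ω) ∂P := by
      rw [← hsplit]; ring
    rw [this]
    have := norm_setIntegral_le_of_norm_le_const (μ := P) (s := (A n)ᶜ)
      (f := fun ω => Zq ω * g (αn n ω)) (C := C * D) (measure_lt_top _ _)
      (fun ω _ => by
        rw [Real.norm_eq_abs, abs_mul]
        exact mul_le_mul (hZqC ω) (hgD _) (abs_nonneg _) hC)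
    simpa [Real.norm_eq_abs, measureReal_def] using this
  -- term 4 : limit comparison
  have hT4 : |(∫ ω, Zq ω ∂P) * M - (∫ ω, Z ω ∂P) * M| ≤ δ * D := by
    rw [← sub_mul, abs_mul]
    have h1 : |(∫ ω, Zq ω ∂P) - ∫ ω, Z ω ∂P| ≤ δ := by
      rw [← integral_sub hZqint hZint]
      have h2 : |∫ ω, (Zq ω - Z ω) ∂P| ≤ ∫ ω, |Zq ω - Z ω| ∂P := by
        simpa [Real.norm_eq_abs] using norm_integral_le_integral_norm (fun ω => Zq ω - Z ω)
      refine h2.trans (le_of_eq ?_)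
      rw [hδdef]
      exact integral_congr_ae (ae_of_all _ (fun ω => abs_sub_comm _ _))
    exact mul_le_mul h1 hMbd (abs_nonneg _) hδ0
  -- put it together
  have hT3' := hN1 n hn1
  rw [Real.dist_eq] at hT3' ⊢
  have hT2' : C * D * (P (A n)ᶜ).toReal < ε / 4 := by
    have h := hN2 n hn2
    rw [Real.dist_eq, sub_zero, abs_of_nonneg ENNReal.toReal_nonneg] at h
    have hCD : 0 ≤ C * D := mul_nonneg hC hD
    calc C * D * (P (A n)ᶜ).toReal ≤ (C * D + 1) * (P (A n)ᶜ).toReal := by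
          have := ENNReal.toReal_nonneg (a := P (A n)ᶜ); nlinarith
      _ < (C * D + 1) * (ε / (4 * (C * D + 1))) := by
          have h0 : (0:ℝ) < C * D + 1 := by linarith
          exact mul_lt_mul_of_pos_left h h0
      _ = ε / 4 := by field_simp
  have hδD : δ * D < ε / 4 := by
    have : δ * D ≤ δ * (D + 1) := by nlinarith
    have h2 : δ * (D + 1) < (ε / (4 * (D + 1))) * (D + 1) := by
      have h0 : (0:ℝ) < D + 1 := by linarith
      exact mul_lt_mul_of_pos_right hδ h0
    have h3 : (ε / (4 * (D + 1))) * (D + 1) = ε / 4 := by field_simp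
    linarith
  set I1 := ∫ ω, Z ω * g (αn n ω) ∂P
  set I2 := ∫ ω, Zq ω * g (αn n ω) ∂P
  set I3 := ∫ ω in A n, Zq ω * g (αn n ω) ∂P
  set Lq := (∫ ω, Zq ω ∂P) * M
  set L := (∫ ω, Z ω ∂P) * M
  have tri1 : |I1 - L| ≤ |I1 - I2| + |I2 - L| := abs_sub_le _ _ _
  have tri2 : |I2 - L| ≤ |I2 - I3| + |I3 - L| := abs_sub_le _ _ _
  have tri3 : |I3 - L| ≤ |I3 - Lq| + |Lq - L| := abs_sub_le _ _ _
  have : |I1 - L| < ε / 4 + ε / 4 + ε / 4 + ε / 4 := by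
    have := hT3'
    linarith [hT1, hT2, hT4]
  linarith
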